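/- arXiv:1706.03376 — 2 statements merged into one kernel-verified Lean document; each statement's English description precedes it below -/
import Mathlib

section
/- Let G be a linearly ordered abelian group, H_1 ⊆ H_2 ⊆ … ⊆ H_k convex subgroups of G, and n_1 | n_2 | … | n_k positive integers. Then (n_1H_1 + n_2H_k) ∩ (n_1H_2 + n_3H_k) ∩ … ∩ (n_1H_{k-1} + n_kH_k) = n_1H_1 + n_2H_2 + … + n_kH_k. (The j-th set in the intersection, for 1 ≤ j ≤ k−1, is n_1H_j + n_{j+1}H_k.) -/
/-- `nH = {n • h : h ∈ H}` as a subgroup. -/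
def smulSub {G : Type*} [AddCommGroup G] (n : ℕ) (H : AddSubgroup G) : AddSubgroup G :=
  AddSubgroup.map (n • AddMonoidHom.id G) H

/-- A subgroup `H` of a linearly ordered abelian group is convex if
`0 ≤ g ≤ h` and `h ∈ H` imply `g ∈ H`. -/
def IsConvexSubgroup {G : Type*} [AddCommGroup G] [LinearOrder G] [IsOrderedAddMonoid G] (H : AddSubgroup G) : Prop :=
  ∀ g h : G, 0 ≤ g → g ≤ h → h ∈ H → g ∈ H

section aux
variable {G : Type*} [AddCommGroup G]

lemma mem_smulSub_iff {n : ℕ} {H : AddSubgroup G} {x : G} :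
    x ∈ smulSub n H ↔ ∃ h ∈ H, n • h = x := by
  simp [smulSub, AddSubgroup.mem_map]

lemma nsmul_mem_smulSub {n : ℕ} {H : AddSubgroup G} {h : G} (hh : h ∈ H) :
    n • h ∈ smulSub n H := mem_smulSub_iff.2 ⟨h, hh, rfl⟩

lemma smulSub_le_smulSub {m n : ℕ} (hd : m ∣ n) {H K : AddSubgroup G} (hle : H ≤ K) :
    smulSub n H ≤ smulSub m K := by
  intro x hx
  obtain ⟨h, hh, rfl⟩ := mem_smulSub_iff.1 hx
  obtain ⟨c, rfl⟩ := hd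
  exact mem_smulSub_iff.2 ⟨c • h, K.nsmul_mem (hle hh) c, (mul_smul m c h).symm⟩

end aux

lemma IsConvexSubgroup.of_nsmul_mem {G : Type*} [AddCommGroup G] [LinearOrder G] [IsOrderedAddMonoid G]
    {K : AddSubgroup G} (hK : IsConvexSubgroup K) {m : ℕ} (hm : 0 < m) {x : G}
    (hx : m • x ∈ K) : x ∈ K := by
  rcases le_total 0 x with h | h
  · refine hK x (m • x) h ?_ hx
    calc x = 1 • x := (one_nsmul x).symm
    _ ≤ m • x := nsmul_le_nsmul_left h hm
  · have h1 : -x ∈ K := by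
      refine hK (-x) (m • (-x)) (neg_nonneg.2 h) ?_ ?_
      · calc -x = 1 • (-x) := (one_nsmul _).symm
        _ ≤ m • (-x) := nsmul_le_nsmul_left (neg_nonneg.2 h) hm
      · rw [smul_neg]; exact K.neg_mem hx
    simpa using K.neg_mem h1

lemma dvd_chain {k : ℕ} (n : ℕ → ℕ) (hdvd : ∀ i : ℕ, i + 1 < k → n i ∣ n (i + 1)) :
    ∀ i j : ℕ, i ≤ j → j < k → n i ∣ n j := by
  intro i j hij hjk
  induction j, hij using Nat.le_induction with
  | base => rfl
  | succ j hij ih => exact (ih (lt_trans (Nat.lt_succ_self j) hjk)).trans (hdvd j hjk)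

lemma mem_biSup_of {G : Type*} [AddCommGroup G] {S : ℕ → AddSubgroup G} {i k : ℕ}
    (hik : i < k) {x : G} (hx : x ∈ S i) : x ∈ ⨆ i ∈ Finset.range k, S i :=
  le_iSup₂ (f := fun i (_ : i ∈ Finset.range k) => S i) i (Finset.mem_range.2 hik) hx

lemma key_mem {G : Type*} [AddCommGroup G] [LinearOrder G] [IsOrderedAddMonoid G] :
    ∀ k : ℕ, 2 ≤ k → ∀ (H : ℕ → AddSubgroup G) (n : ℕ → ℕ),
    (∀ i < k, IsConvexSubgroup (H i)) →
    (∀ i j : ℕ, i ≤ j → j < k → H i ≤ H j) →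
    (∀ i < k, 0 < n i) →
    (∀ i : ℕ, i + 1 < k → n i ∣ n (i + 1)) →
    ∀ g : G, (∀ j < k - 1, g ∈ smulSub (n 0) (H j) ⊔ smulSub (n (j + 1)) (H (k - 1))) →
    g ∈ ⨆ i ∈ Finset.range k, smulSub (n i) (H i) := by
  intro k hk
  induction k, hk using Nat.le_induction with
  | base =>
    intro H n hconv hmono hpos hdvd g hg
    have h0 := hg 0 (by norm_num)
    simp only [show (2:ℕ) - 1 = 1 from rfl] at h0
    rcases AddSubgroup.mem_sup.1 h0 with ⟨y, hy, z, hz, rfl⟩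
    exact AddSubgroup.add_mem _ (mem_biSup_of (by norm_num) hy) (mem_biSup_of (by norm_num) hz)
  | succ k hk ih =>
    intro H n hconv hmono hpos hdvd g hg
    have hk1 : k - 1 < k := Nat.sub_lt (by omega) one_pos
    have hlast := hg (k - 1) (by omega)
    rw [show k + 1 - 1 = k from rfl, show k - 1 + 1 = k by omega] at hlast
    rcases AddSubgroup.mem_sup.1 hlast with ⟨y, hy, z, hz, hyz⟩
    obtain ⟨a, ha, rfl⟩ := mem_smulSub_iff.1 hy
    obtain ⟨b, hb, rfl⟩ := mem_smulSub_iff.1 hz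
    -- g = n 0 • a + n k • b, a ∈ H (k-1), b ∈ H k
    have hg' : ∀ j < k - 1,
        (n 0) • a ∈ smulSub (n 0) (H j) ⊔ smulSub (n (j + 1)) (H (k - 1)) := by
      intro j hj
      have hgj := hg j (by omega)
      rw [show k + 1 - 1 = k from rfl] at hgj
      rcases AddSubgroup.mem_sup.1 hgj with ⟨y', hy', z', hz', hyz'⟩
      obtain ⟨aj, haj, rfl⟩ := mem_smulSub_iff.1 hy'
      obtain ⟨bj, hbj, rfl⟩ := mem_smulSub_iff.1 hz'
      have hdvdj : n (j + 1) ∣ n k :=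
        dvd_chain n hdvd (j + 1) k (by omega) (by omega)
      obtain ⟨m, hm⟩ := hdvdj
      have E : (n 0) • a + (n k) • b = (n 0) • aj + (n (j+1)) • bj := hyz.trans hyz'.symm
      have h1 : (n (j+1)) • (m • b) = (n k) • b := by rw [← mul_smul, ← hm]
      have heq : (n (j+1)) • (bj - m • b) = (n 0) • (a - aj) := by
        rw [smul_sub, h1, smul_sub, sub_eq_sub_iff_add_eq_add, add_comm]
        exact E.symm
      have hcmem : bj - m • b ∈ H (k - 1) := by
        refine (hconv (k - 1) (by omega)).of_nsmul_mem (hpos (j + 1) (by omega)) ?_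
        rw [heq]
        exact (H (k-1)).nsmul_mem
          ((H (k-1)).sub_mem ha (hmono j (k-1) (by omega) (by omega) haj)) _
      refine AddSubgroup.mem_sup.2 ⟨(n 0) • aj, nsmul_mem_smulSub haj,
        (n (j+1)) • (bj - m • b), nsmul_mem_smulSub hcmem, ?_⟩
      rw [heq, smul_sub]
      abel
    have hIH := ih H n (fun i hi => hconv i (by omega)) (fun i j hij hjk => hmono i j hij (by omega))
      (fun i hi => hpos i (by omega)) (fun i hi => hdvd i (by omega)) ((n 0) • a) hg'
    have hle : (⨆ i ∈ Finset.range k, smulSub (n i) (H i)) ≤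
        ⨆ i ∈ Finset.range (k + 1), smulSub (n i) (H i) :=
      iSup₂_le fun i hi => le_iSup₂ (f := fun i (_ : i ∈ Finset.range (k+1)) => smulSub (n i) (H i))
        i (Finset.mem_range.2 (by have := Finset.mem_range.1 hi; omega))
    rw [← hyz]
    exact AddSubgroup.add_mem _ (hle hIH) (mem_biSup_of (Nat.lt_succ_self k) (nsmul_mem_smulSub hb))

/-- Let `H 0 ⊆ H 1 ⊆ … ⊆ H (k-1)` be convex subgroups of a linearly ordered abelian
group and `n 0 ∣ n 1 ∣ … ∣ n (k-1)` positive integers. Then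
`⋂_{j<k-1} (n 0 • H j + n (j+1) • H (k-1)) = n 0 • H 0 + … + n (k-1) • H (k-1)`.
(Here the paper's 1-based indices `1,…,k` are rendered as `0,…,k-1`.) -/
theorem inf_of_sums_eq_sum_of_smul_convex {G : Type*} [AddCommGroup G] [LinearOrder G] [IsOrderedAddMonoid G]
    (k : ℕ) (hk : 2 ≤ k) (H : ℕ → AddSubgroup G) (n : ℕ → ℕ)
    (hconv : ∀ i < k, IsConvexSubgroup (H i))
    (hmono : ∀ i j : ℕ, i ≤ j → j < k → H i ≤ H j)
    (hpos : ∀ i < k, 0 < n i)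
    (hdvd : ∀ i : ℕ, i + 1 < k → n i ∣ n (i + 1)) :
    (⨅ j ∈ Finset.range (k - 1), (smulSub (n 0) (H j) ⊔ smulSub (n (j + 1)) (H (k - 1)))) =
      ⨆ i ∈ Finset.range k, smulSub (n i) (H i) := by
  apply le_antisymm
  · intro g hg
    refine key_mem k hk H n hconv hmono hpos hdvd g ?_
    intro j hj
    have := (AddSubgroup.mem_iInf.1 hg) j
    exact (AddSubgroup.mem_iInf.1 this) (Finset.mem_range.2 hj)
  · refine iSup₂_le fun i hi => le_iInf₂ fun j hj => ?_
    have hik : i < k := Finset.mem_range.1 hi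
    have hjk : j < k - 1 := Finset.mem_range.1 hj
    rcases le_or_gt i j with h | h
    · exact le_trans (smulSub_le_smulSub (dvd_chain n hdvd 0 i (Nat.zero_le i) hik)
        (hmono i j h (by omega))) le_sup_left
    · exact le_trans (smulSub_le_smulSub (dvd_chain n hdvd (j+1) i h hik)
        (hmono i (k-1) (by omega) (by omega))) le_sup_right
end

section
/- Let G be a linearly ordered abelian group with finite spines, p a prime, H_0 ⊊ H_1 ⊊ … ⊊ H_{n-1} convex subgroups of G with H_n := G, and e_0 < e_1 < … < e_{n-2} positive integers. Set A_i = H_i + p^{e_i}G for i < n−1 and A_{n-1} = H_{n-1}. Then: (a) the index [⋂_{i<n-1}A_i : ⋂_{i<n}A_i] is always infinite; and (b) for every r < n−1, the index [⋂_{i<n, i≠r}A_i : ⋂_{i<n}A_i] is infinite if and only if the index [H_{r+1} : H_r + pH_{r+1}] is infinite. -/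
/-- `H_n(a)`: the largest convex subgroup `H` of `G` with `a ∉ H + nG` (equivalently the
union, i.e. supremum, of all such subgroups); it is the trivial subgroup when `a ∈ nG`. -/
def Hsub {G : Type*} [AddCommGroup G] [LinearOrder G] [IsOrderedAddMonoid G] (n : ℕ) (a : G) : AddSubgroup G :=
  sSup {H : AddSubgroup G | IsConvexSubgroup H ∧ a ∉ H ⊔ smulSub n ⊤}

lemma mem_smulSub {G : Type*} [AddCommGroup G] {n : ℕ} {H : AddSubgroup G} {x : G} :
    x ∈ smulSub n H ↔ ∃ h ∈ H, n • h = x := by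
  simp [smulSub, AddSubgroup.mem_map]

lemma convex_pure {G : Type*} [AddCommGroup G] [LinearOrder G] [IsOrderedAddMonoid G] {H : AddSubgroup G}
    (hH : IsConvexSubgroup H) {m : ℕ} (hm : m ≠ 0) {g : G} (h : m • g ∈ H) : g ∈ H := by
  rcases le_total 0 g with hg | hg
  · refine hH g (m • g) hg ?_ h
    calc g = 1 • g := (one_nsmul g).symm
    _ ≤ m • g := nsmul_le_nsmul_left hg (Nat.one_le_iff_ne_zero.mpr hm)
  · have h' : m • (-g) ∈ H := by rw [smul_neg]; exact H.neg_mem h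
    have hg' : (0:G) ≤ -g := neg_nonneg.mpr hg
    have := hH (-g) (m • (-g)) hg'
      (by calc -g = 1 • (-g) := (one_nsmul _).symm
          _ ≤ m • (-g) := nsmul_le_nsmul_left hg' (Nat.one_le_iff_ne_zero.mpr hm)) h'
    simpa using H.neg_mem this

lemma relindex_eq_zero_of_family {G : Type*} [AddCommGroup G] {H K : AddSubgroup G} (x : ℕ → G)
    (hxK : ∀ k, x k ∈ K) (hd : ∀ k l, k < l → x l - x k ∉ H) :
    H.relIndex K = 0 := by
  rw [AddSubgroup.relIndex, AddSubgroup.index, Nat.card_eq_zero]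
  right
  refine Infinite.of_injective (fun k => QuotientAddGroup.mk (⟨x k, hxK k⟩ : K)) ?_
  intro k l hkl
  have hmem : -(⟨x k, hxK k⟩ : K) + ⟨x l, hxK l⟩ ∈ H.addSubgroupOf K :=
    QuotientAddGroup.eq.mp hkl
  rw [AddSubgroup.mem_addSubgroupOf] at hmem
  have hmem' : x l - x k ∈ H := by
    simpa [sub_eq_neg_add] using hmem
  rcases lt_trichotomy k l with h | h | h
  · exact absurd hmem' (hd k l h)
  · exact h
  · exact absurd (by simpa using H.neg_mem hmem') (hd l k h)

lemma exists_family_of_relindex_eq_zero {G : Type*} [AddCommGroup G] {H K : AddSubgroup G}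
    (h : H.relIndex K = 0) :
    ∃ x : ℕ → G, (∀ k, x k ∈ K) ∧ ∀ k l, k < l → x l - x k ∉ H := by
  rw [AddSubgroup.relIndex, AddSubgroup.index, Nat.card_eq_zero] at h
  have hinf : Infinite (K ⧸ H.addSubgroupOf K) := by
    rcases h with h | h
    · exact absurd h (not_isEmpty_of_nonempty _)
    · exact h
  obtain ⟨g, hg⟩ : ∃ g : (K ⧸ H.addSubgroupOf K) → K, ∀ q, QuotientAddGroup.mk (g q) = q :=
    ⟨fun q => (QuotientAddGroup.mk_surjective q).choose,
      fun q => (QuotientAddGroup.mk_surjective q).choose_spec⟩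
  set f := hinf.natEmbedding
  refine ⟨fun k => (g (f k) : G), fun k => (g (f k)).2, fun k l hkl hmem => ?_⟩
  simp only at hmem
  have heq : f k = f l := by
    rw [← hg (f k), ← hg (f l)]
    apply (QuotientAddGroup.eq).mpr
    rw [AddSubgroup.mem_addSubgroupOf]
    simpa [sub_eq_neg_add] using hmem
  exact absurd (f.injective heq) (Nat.ne_of_lt hkl)

lemma relindex_pow_ne_zero {G : Type*} [AddCommGroup G] {p : ℕ} {Hr K : AddSubgroup G}
    (hHrK : Hr ≤ K)
    (h1 : (Hr ⊔ smulSub p K).relIndex K ≠ 0) :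
    ∀ s : ℕ, (Hr ⊔ smulSub (p ^ (s + 1)) K).relIndex K ≠ 0 := by
  have hLK : ∀ t : ℕ, Hr ⊔ smulSub (p ^ t) K ≤ K := by
    intro t
    refine sup_le hHrK ?_
    intro x hx
    rcases mem_smulSub.mp hx with ⟨h, hh, rfl⟩
    exact K.nsmul_mem hh _
  intro s
  induction s with
  | zero => simpa [pow_one] using h1
  | succ s ih =>
    have hmono : Hr ⊔ smulSub (p ^ (s + 2)) K ≤ Hr ⊔ smulSub (p ^ (s + 1)) K := by
      refine sup_le le_sup_left ?_
      intro x hx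
      rcases mem_smulSub.mp hx with ⟨h, hh, rfl⟩
      refine AddSubgroup.mem_sup_right (mem_smulSub.mpr ⟨p • h, K.nsmul_mem hh p, ?_⟩)
      rw [← mul_nsmul', ← pow_succ]
    have hstep : (Hr ⊔ smulSub (p ^ (s + 2)) K).relIndex (Hr ⊔ smulSub (p ^ (s + 1)) K) ≠ 0 := by
      intro h0
      obtain ⟨y, hyK, hyd⟩ := exists_family_of_relindex_eq_zero h0
      have hdec : ∀ k, ∃ h : G, h ∈ K ∧ y k - (p ^ (s + 1)) • h ∈ Hr := by
        intro k
        rcases AddSubgroup.mem_sup.mp (hyK k) with ⟨a, ha, b, hb, hab⟩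
        rcases mem_smulSub.mp hb with ⟨h, hh, rfl⟩
        exact ⟨h, hh, by rw [← hab]; simpa⟩
      choose h hhK hhr using hdec
      refine h1 (relindex_eq_zero_of_family h hhK ?_)
      intro k l hkl hmem
      refine hyd k l hkl ?_
      rcases AddSubgroup.mem_sup.mp hmem with ⟨a, ha, b, hb, hab⟩
      rcases mem_smulSub.mp hb with ⟨h', hh', rfl⟩
      have hyeq : y l - y k = ((y l - (p ^ (s + 1)) • h l) - (y k - (p ^ (s + 1)) • h k))
          + ((p ^ (s + 1)) • a + (p ^ (s + 1)) • (p • h')) := by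
        rw [← smul_add, hab, smul_sub]; abel
      rw [hyeq]
      refine AddSubgroup.add_mem _
        (AddSubgroup.mem_sup_left (Hr.sub_mem (hhr l) (hhr k)))
        (AddSubgroup.add_mem _ (AddSubgroup.mem_sup_left (Hr.nsmul_mem ha _))
          (AddSubgroup.mem_sup_right (mem_smulSub.mpr ⟨h', hh', ?_⟩)))
      rw [← mul_nsmul', ← pow_succ]
    have := AddSubgroup.relIndex_mul_relIndex _ _ K hmono (hLK (s + 1))
    intro h0
    rw [h0] at this
    exact mul_ne_zero hstep ih this

/-- Let `G` be a linearly ordered abelian group with finite spines, `p` a prime,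
`H 0 ⊊ … ⊊ H (n-1)` convex subgroups with `H n = G`, and `e 0 < … < e (n-2)` positive
integers.  Set `A i = H i + p^(e i) G` for `i < n - 1` and `A (n-1) = H (n-1)`
(the case `e (n-1) = ∞`).  Then:
(a) the index `[⋂_{i<n-1} A i : ⋂_{i<n} A i]` is always infinite; and
(b) for every `r < n - 1`, the index `[⋂_{i<n, i≠r} A i : ⋂_{i<n} A i]` is infinite iff
the index `[H (r+1) : H r + p H (r+1)]` is infinite.
(Infinite index is expressed by `AddSubgroup.relindex … = 0`.) -/
theorem relindex_inf_infinite_with_top_exponent {G : Type*} [AddCommGroup G] [LinearOrder G] [IsOrderedAddMonoid G]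
    (hfs : ∀ q : ℕ, q.Prime → {H : AddSubgroup G | ∃ a : G, H = Hsub q a}.Finite)
    (p : ℕ) (hp : p.Prime) (n : ℕ) (hn : 1 ≤ n) (H : ℕ → AddSubgroup G)
    (hconv : ∀ i < n, IsConvexSubgroup (H i))
    (hchain : ∀ i j : ℕ, i < j → j ≤ n → H i < H j)
    (hHn : H n = ⊤)
    (e : ℕ → ℕ) (hepos : ∀ i < n - 1, 0 < e i)
    (hemono : ∀ i j : ℕ, i < j → j < n - 1 → e i < e j)
    (A : ℕ → AddSubgroup G)
    (hA : ∀ i < n - 1, A i = H i ⊔ smulSub (p ^ e i) ⊤)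
    (hAlast : A (n - 1) = H (n - 1)) :
    ((⨅ i ∈ Finset.range n, A i).relIndex (⨅ i ∈ Finset.range (n - 1), A i) = 0) ∧
      ∀ r < n - 1,
        (((⨅ i ∈ Finset.range n, A i).relIndex (⨅ i ∈ (Finset.range n).erase r, A i) = 0) ↔
          ((H r ⊔ smulSub p (H (r + 1))).relIndex (H (r + 1)) = 0)) := by
  obtain ⟨m, rfl⟩ : ∃ m, n = m + 1 := ⟨n - 1, by omega⟩
  simp only [Nat.add_sub_cancel] at hepos hemono hA hAlast ⊢
  clear hn hfs
  have hppos : p ≠ 0 := hp.pos.ne'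
  -- membership characterizations
  have hmemB : ∀ x : G, x ∈ (⨅ i ∈ Finset.range (m + 1), A i) ↔ ∀ i < m + 1, x ∈ A i := by
    intro x; simp [AddSubgroup.mem_iInf]
  have hmemB' : ∀ x : G, x ∈ (⨅ i ∈ Finset.range m, A i) ↔ ∀ i < m, x ∈ A i := by
    intro x; simp [AddSubgroup.mem_iInf]
  have hHle : ∀ i j : ℕ, i ≤ j → j ≤ m + 1 → H i ≤ H j := by
    intro i j hij hj
    rcases hij.lt_or_eq with h | rfl
    · exact (hchain i j h hj).le
    · exact le_rfl
  have hHleA : ∀ i ≤ m, H i ≤ A i := by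
    intro i hi
    rcases hi.lt_or_eq with h | rfl
    · rw [hA i h]; exact le_sup_left
    · rw [hAlast]
  have hsmulA : ∀ i < m, smulSub (p ^ e i) ⊤ ≤ A i := by
    intro i hi; rw [hA i hi]; exact le_sup_right
  -- positive element outside H m
  have hHmtop : H m < ⊤ := by
    have := hchain m (m + 1) (Nat.lt_succ_self m) le_rfl
    rwa [hHn] at this
  obtain ⟨g0, hg0⟩ : ∃ g0 : G, g0 ∉ H m := by
    by_contra hc
    push_neg at hc
    exact hHmtop.ne (top_unique fun x _ => hc x)
  have hg0ne : g0 ≠ 0 := fun h => hg0 (h ▸ (H m).zero_mem)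
  set g := |g0| with hgdef
  have hgpos : 0 < g := abs_pos.mpr hg0ne
  have hgnot : g ∉ H m := by
    rcases abs_choice g0 with h | h
    · rw [hgdef, h]; exact hg0
    · rw [hgdef, h]; intro hmem; exact hg0 (by simpa using (H m).neg_mem hmem)
  constructor
  · -- part (a)
    set q : ℕ := if m = 0 then 1 else p ^ e (m - 1) with hq
    have hqne : q ≠ 0 := by
      rw [hq]; split
      · exact one_ne_zero
      · exact pow_ne_zero _ hppos
    have hcA : ∀ i < m, q • g ∈ A i := by
      intro i hi
      have hm0 : m ≠ 0 := by omega
      have hei : e i ≤ e (m - 1) := by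
        rcases Nat.lt_or_ge i (m - 1) with h | h
        · exact (hemono i (m - 1) h (by omega)).le
        · have : i = m - 1 := by omega
          rw [this]
      refine hsmulA i hi (mem_smulSub.mpr ⟨p ^ (e (m - 1) - e i) • g, trivial, ?_⟩)
      rw [← mul_nsmul', ← pow_add]
      have hexp : e i + (e (m - 1) - e i) = e (m - 1) := by omega
      rw [hexp]
      simp only [hq, if_neg hm0]
    refine relindex_eq_zero_of_family (fun k => k • (q • g)) ?_ ?_
    · intro k
      rw [hmemB']
      intro i hi
      exact (A i).nsmul_mem (hcA i hi) k
    · intro k l hkl hmem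
      rw [hmemB] at hmem
      have hAm : l • (q • g) - k • (q • g) ∈ H m := by
        rw [← hAlast]; exact hmem m (Nat.lt_succ_self m)
      have heq : l • (q • g) - k • (q • g) = ((l - k) * q) • g := by
        rw [sub_eq_add_neg, ← sub_nsmul (q • g) hkl.le, ← mul_nsmul']
      rw [heq] at hAm
      exact hgnot (convex_pure (hconv m (Nat.lt_succ_self m))
        (Nat.mul_ne_zero (by omega) hqne) hAm)
  · -- part (b)
    intro r hr
    have hrm : r < m := hr
    set K' := H (r + 1) with hK'
    have hconvK' : IsConvexSubgroup K' := hconv (r + 1) (by omega)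
    have hconvHr : IsConvexSubgroup (H r) := hconv r (by omega)
    have hHrK' : H r ≤ K' := (hchain r (r + 1) (Nat.lt_succ_self r) (by omega)).le
    have hmemCr : ∀ x : G, x ∈ (⨅ i ∈ (Finset.range (m + 1)).erase r, A i) ↔
        ∀ i, i ≠ r → i < m + 1 → x ∈ A i := by
      intro x
      simp [AddSubgroup.mem_iInf, Finset.mem_erase]
    have hsmulK'le : ∀ t : ℕ, smulSub t K' ≤ smulSub t ⊤ := by
      intro t x hx
      rcases mem_smulSub.mp hx with ⟨h, -, rfl⟩
      exact mem_smulSub.mpr ⟨h, trivial, rfl⟩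
    have hArle : H r ⊔ smulSub (p ^ e r) K' ≤ A r := by
      rw [hA r hrm]
      exact sup_le le_sup_left (le_trans (hsmulK'le _) le_sup_right)
    constructor
    · intro h0
      obtain ⟨x, hxCr, hxd⟩ := exists_family_of_relindex_eq_zero h0
      have hdec : ∀ k, ∃ h : G, h ∈ K' ∧ x k - h ∈ A r := by
        intro k
        have hxr1 : x k ∈ A (r + 1) := (hmemCr _).mp (hxCr k) (r + 1) (by omega) (by omega)
        rcases Nat.lt_or_ge (r + 1) m with hcase | hcase
        · rw [hA (r + 1) hcase] at hxr1
          rcases AddSubgroup.mem_sup.mp hxr1 with ⟨a, ha, b, hb, hab⟩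
          rcases mem_smulSub.mp hb with ⟨g', -, rfl⟩
          refine ⟨a, ha, ?_⟩
          have hxa : x k - a = p ^ e (r + 1) • g' := by rw [← hab]; abel
          rw [hxa]
          refine hsmulA r hrm (mem_smulSub.mpr ⟨p ^ (e (r + 1) - e r) • g', trivial, ?_⟩)
          rw [← mul_nsmul', ← pow_add]
          have hexp : e r + (e (r + 1) - e r) = e (r + 1) := by
            have := hemono r (r + 1) (Nat.lt_succ_self r) hcase; omega
          rw [hexp]
        · have hr1m : r + 1 = m := by omega
          refine ⟨x k, ?_, by simp [(A r).zero_mem]⟩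
          rw [hK', hr1m, ← hAlast, ← hr1m]
          exact hxr1
      choose h hhK hhA using hdec
      have hstep1 : (H r ⊔ smulSub (p ^ e r) K').relIndex K' = 0 := by
        refine relindex_eq_zero_of_family h hhK ?_
        intro k l hkl hmem
        refine hxd k l hkl ?_
        rw [hmemB]
        intro i hi
        rcases eq_or_ne i r with rfl | hir
        · have hsplit : x l - x k = ((x l - h l) - (x k - h k)) + (h l - h k) := by abel
          rw [hsplit]
          exact (A i).add_mem ((A i).sub_mem (hhA l) (hhA k)) (hArle hmem)
        · exact (A i).sub_mem ((hmemCr _).mp (hxCr l) i hir hi)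
            ((hmemCr _).mp (hxCr k) i hir hi)
      by_contra hne
      have hiter := relindex_pow_ne_zero hHrK' hne (e r - 1)
      rw [show e r - 1 + 1 = e r from by have := hepos r hrm; omega] at hiter
      exact hiter hstep1
    · intro h0
      obtain ⟨h, hhK, hhd⟩ := exists_family_of_relindex_eq_zero h0
      set q' : ℕ := if r = 0 then 1 else p ^ e (r - 1) with hq'
      have hq'ne : q' ≠ 0 := by
        rw [hq']; split
        · exact one_ne_zero
        · exact pow_ne_zero _ hppos
      have hxCr : ∀ k, q' • h k ∈ (⨅ i ∈ (Finset.range (m + 1)).erase r, A i) := by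
        intro k
        rw [hmemCr]
        intro i hir hi
        rcases Nat.lt_or_ge r i with hcase | hcase
        · exact hHleA i (by omega) (hHle (r + 1) i hcase (by omega) (K'.nsmul_mem (hhK k) q'))
        · have hir' : i < r := by omega
          have hr0 : r ≠ 0 := by omega
          have hei : e i ≤ e (r - 1) := by
            rcases Nat.lt_or_ge i (r - 1) with hh | hh
            · exact (hemono i (r - 1) hh (by omega)).le
            · have hieq : i = r - 1 := by omega
              rw [hieq]
          refine hsmulA i (by omega) (mem_smulSub.mpr ⟨p ^ (e (r - 1) - e i) • h k, trivial, ?_⟩)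
          rw [← mul_nsmul', ← pow_add]
          have hexp : e i + (e (r - 1) - e i) = e (r - 1) := by omega
          rw [hexp, hq', if_neg hr0]
      refine relindex_eq_zero_of_family (fun k => q' • h k) hxCr ?_
      intro k l hkl hmem
      refine hhd k l hkl ?_
      set d := h l - h k with hd
      have hdK : d ∈ K' := K'.sub_mem (hhK l) (hhK k)
      have hdA : q' • d ∈ A r := by
        have hmr := (hmemB _).mp hmem r (by omega)
        rwa [← smul_sub] at hmr
      rw [hA r hrm] at hdA
      rcases AddSubgroup.mem_sup.mp hdA with ⟨a, ha, b, hb, hab⟩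
      rcases mem_smulSub.mp hb with ⟨g', -, rfl⟩
      set s := e r - (if r = 0 then 0 else e (r - 1)) with hs
      have hs1 : 1 ≤ s := by
        rw [hs]; split
        · have := hepos r hrm; omega
        · rename_i hr0
          have := hemono (r - 1) r (by omega) hrm
          omega
      have hqs : q' * p ^ s = p ^ e r := by
        rw [hq', hs]
        by_cases hr0 : r = 0
        · simp [hr0]
        · rw [if_neg hr0, if_neg hr0, ← pow_add]
          congr 1
          have := hemono (r - 1) r (by omega) hrm
          omega
      have hw : q' • (d - p ^ s • g') ∈ H r := by
        have heq2 : q' • (d - p ^ s • g') = a := by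
          rw [smul_sub, ← mul_nsmul', hqs, ← hab]; abel
        rw [heq2]; exact ha
      have hwHr : d - p ^ s • g' ∈ H r := convex_pure hconvHr hq'ne hw
      have hpsg : p ^ s • g' ∈ K' := by
        have heq3 : p ^ s • g' = d - (d - p ^ s • g') := by abel
        rw [heq3]; exact K'.sub_mem hdK (hHrK' hwHr)
      have hpp : p * p ^ (s - 1) = p ^ s := by
        rw [← pow_succ']
        congr 1
        omega
      have hps1 : p ^ (s - 1) • g' ∈ K' := by
        refine convex_pure hconvK' hppos ?_
        rw [← mul_nsmul', hpp]
        exact hpsg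
      have hdsplit : d = (d - p ^ s • g') + p ^ s • g' := by abel
      rw [hdsplit]
      refine AddSubgroup.add_mem _ (AddSubgroup.mem_sup_left hwHr)
        (AddSubgroup.mem_sup_right (mem_smulSub.mpr ⟨p ^ (s - 1) • g', hps1, ?_⟩))
      rw [← mul_nsmul', hpp]
end
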